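/- Let F be any field and M an M_d-matrix over F with CR(M) = MaxR(M) = r. Then PR(M) ≤ 2^d · r. -/

import Mathlib

open MvPolynomial

section Defs

variable {F : Type*} [Field F]

/-- A polynomial in the block variables `x_{i,j}` (`i ∈ Fin d`, `j ∈ Fin n`) is
multilinear exactly in the blocks of `S`: every monomial has degree 1 in each block
`i ∈ S` and degree 0 in each block `i ∉ S`. -/
def IsMultilinearOn {d n : ℕ} (S : Finset (Fin d))
    (f : MvPolynomial (Fin d × Fin n) F) : Prop :=
  ∀ m ∈ f.support, ∀ i : Fin d,
    (∑ j : Fin n, m (i, j)) = if i ∈ S then 1 else 0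

/-- A multilinear form: degree 1 in every block of variables. -/
def IsMultilinear {d n : ℕ} (f : MvPolynomial (Fin d × Fin n) F) : Prop :=
  IsMultilinearOn Finset.univ f

/-- Commutative rank: the rank of the matrix over the field of fractions of the
polynomial ring. -/
noncomputable def CR {σ : Type*} {α β : Type*} [Fintype β]
    (M : Matrix α β (MvPolynomial σ F)) : ℕ :=
  (M.map (algebraMap (MvPolynomial σ F) (FractionRing (MvPolynomial σ F)))).rank

/-- `M` is the sum of `r` outer products `u ⊗ v`, where `u` has entries multilinear
in the blocks of some `S ⊆ [d]` and `v` has entries multilinear in the complementary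
blocks. -/
def HasPRDecomp {d n a b : ℕ}
    (M : Matrix (Fin a) (Fin b) (MvPolynomial (Fin d × Fin n) F)) (r : ℕ) : Prop :=
  ∃ (S : Fin r → Finset (Fin d))
    (u : Fin r → Fin a → MvPolynomial (Fin d × Fin n) F)
    (v : Fin r → Fin b → MvPolynomial (Fin d × Fin n) F),
    (∀ t i, IsMultilinearOn (S t) (u t i)) ∧
    (∀ t j, IsMultilinearOn (S t)ᶜ (v t j)) ∧
    M = ∑ t, Matrix.of fun i j => u t i * v t j

/-- Partition rank of a matrix of multilinear forms. -/
noncomputable def PR {d n a b : ℕ}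
    (M : Matrix (Fin a) (Fin b) (MvPolynomial (Fin d × Fin n) F)) : ℕ :=
  sInf {r | HasPRDecomp M r}

/-- Evaluation of a matrix of multilinear forms at a point `p ∈ (F^n)^d`. -/
noncomputable def evalMat {d n : ℕ} {α β : Type*}
    (M : Matrix α β (MvPolynomial (Fin d × Fin n) F)) (p : Fin d → Fin n → F) :
    Matrix α β F :=
  M.map (eval fun v => p v.1 v.2)

/-- Max-rank: the largest rank of a scalar evaluation. -/
noncomputable def MaxR {d n : ℕ} {α β : Type*} [Fintype β]
    (M : Matrix α β (MvPolynomial (Fin d × Fin n) F)) : ℕ :=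
  ⨆ p : Fin d → Fin n → F, (evalMat M p).rank

/-- Partial evaluation: substitute `x_i := p_i` for `i ∈ S`, leaving the other
blocks of variables untouched. -/
noncomputable def pevalMat {d n : ℕ} {α β : Type*}
    (M : Matrix α β (MvPolynomial (Fin d × Fin n) F)) (S : Finset (Fin d))
    (p : Fin d → Fin n → F) :
    Matrix α β (MvPolynomial (Fin d × Fin n) F) :=
  M.map (aeval fun v : Fin d × Fin n => if v.1 ∈ S then C (p v.1 v.2) else X v)

end Defs

section D1

variable {F : Type*} [Field F]

/-- Partition-rank decomposition for matrices of linear forms: a sum of `r` outer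
products, each either (scalars) ⊗ (linear forms) or (linear forms) ⊗ (scalars). -/
def HasPR1Decomp {n a b : ℕ}
    (M : Matrix (Fin a) (Fin b) (MvPolynomial (Fin n) F)) (r : ℕ) : Prop :=
  ∃ (c : Fin r → Bool)
    (u : Fin r → Fin a → MvPolynomial (Fin n) F)
    (v : Fin r → Fin b → MvPolynomial (Fin n) F),
    (∀ t i, (u t i).IsHomogeneous (if c t then 0 else 1)) ∧
    (∀ t j, (v t j).IsHomogeneous (if c t then 1 else 0)) ∧
    M = ∑ t, Matrix.of fun i j => u t i * v t j

/-- Partition rank of a matrix of linear forms. -/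
noncomputable def PR1 {n a b : ℕ}
    (M : Matrix (Fin a) (Fin b) (MvPolynomial (Fin n) F)) : ℕ :=
  sInf {r | HasPR1Decomp M r}

/-- Max-rank of a matrix of linear forms. -/
noncomputable def MaxR1 {n a b : ℕ}
    (M : Matrix (Fin a) (Fin b) (MvPolynomial (Fin n) F)) : ℕ :=
  ⨆ p : Fin n → F, (M.map (eval p)).rank

end D1

section Tensor3

variable {F : Type*} [Field F]

/-- Substitute the first two blocks of variables of a trilinear form at `x` and `y`,
leaving a polynomial in the third block. -/
noncomputable def sub01 {n : ℕ} (T : MvPolynomial (Fin 3 × Fin n) F)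
    (x y : Fin n → F) : MvPolynomial (Fin 3 × Fin n) F :=
  aeval (fun v : Fin 3 × Fin n =>
    if v.1 = 0 then C (x v.2) else if v.1 = 1 then C (y v.2) else X v) T

open Classical in
/-- The bias of a 3-tensor: the probability over `(x, y)` that `T(x, y, -)` is the
zero linear form. -/
noncomputable def bias {n : ℕ} [Fintype F] (T : MvPolynomial (Fin 3 × Fin n) F) : ℝ :=
  ((Finset.univ.filter fun p : (Fin n → F) × (Fin n → F) =>
      sub01 T p.1 p.2 = 0).card : ℝ) /
    ((Fintype.card ((Fin n → F) × (Fin n → F))) : ℝ)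

/-- The analytic rank of a 3-tensor. -/
noncomputable def AR {n : ℕ} [Fintype F] (T : MvPolynomial (Fin 3 × Fin n) F) : ℝ :=
  - Real.logb (Fintype.card F) (bias T)

/-- A slice-rank decomposition: `T = ∑ f_t g_t` with `f_t` a linear form in one
block and `g_t` a bilinear form in the other two blocks. -/
def HasSRDecomp {n : ℕ} (T : MvPolynomial (Fin 3 × Fin n) F) (r : ℕ) : Prop :=
  ∃ (c : Fin r → Fin 3) (f g : Fin r → MvPolynomial (Fin 3 × Fin n) F),
    (∀ t, IsMultilinearOn {c t} (f t)) ∧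
    (∀ t, IsMultilinearOn ({c t} : Finset (Fin 3))ᶜ (g t)) ∧
    T = ∑ t, f t * g t

/-- Slice rank of a 3-tensor. -/
noncomputable def SR {n : ℕ} (T : MvPolynomial (Fin 3 × Fin n) F) : ℕ :=
  sInf {r | HasSRDecomp T r}

/-- The matrix `mat T` of a 3-tensor, evaluated at `x` in its first block:
the `(j,k)` entry is `T(x, e_j, e_k)`. -/
noncomputable def matT {n : ℕ} (T : MvPolynomial (Fin 3 × Fin n) F)
    (x : Fin n → F) : Matrix (Fin n) (Fin n) F :=
  Matrix.of fun j k => eval (fun v : Fin 3 × Fin n =>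
    if v.1 = 0 then x v.2
    else if v.1 = 1 then (if v.2 = j then 1 else 0)
    else (if v.2 = k then 1 else 0)) T

end Tensor3

section Mult

variable {F : Type*} [Field F]

/-- `mult(f, p)`: the minimum total degree of a monomial of `f(x + p)`. -/
noncomputable def polyMult {n : ℕ} (f : MvPolynomial (Fin n) F) (p : Fin n → F) : ℕ :=
  sInf {k | ∃ m ∈ (aeval (fun i : Fin n => X i + C (p i)) f :
    MvPolynomial (Fin n) F).support, (∑ i, m i) = k}

end Mult

section AuxP
open MvPolynomial
variable {F : Type*} [Field F] {d n : ℕ}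



def IsProf (S : Finset (Fin d)) (m : Fin d × Fin n →₀ ℕ) : Prop :=
  ∀ i : Fin d, (∑ j : Fin n, m (i, j)) = if i ∈ S then 1 else 0

instance (S : Finset (Fin d)) (m : Fin d × Fin n →₀ ℕ) : Decidable (IsProf S m) :=
  inferInstanceAs (Decidable (∀ i : Fin d, _ = _))

noncomputable def compP (S : Finset (Fin d)) (f : MvPolynomial (Fin d × Fin n) F) :
    MvPolynomial (Fin d × Fin n) F :=
  ∑ m ∈ f.support, if IsProf S m then monomial m (coeff m f) else 0

theorem coeff_compP (S : Finset (Fin d)) (f : MvPolynomial (Fin d × Fin n) F)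
    (m : Fin d × Fin n →₀ ℕ) :
    coeff m (compP S f) = if IsProf S m then coeff m f else 0 := by
  classical
  unfold compP
  rw [coeff_sum]
  by_cases hm : m ∈ f.support
  · rw [Finset.sum_eq_single m (fun m' _ hne => ?h1) (fun h => absurd hm h)]
    · split_ifs with h
      · simp [coeff_monomial]
      · simp
    case h1 =>
      split_ifs
      · rw [coeff_monomial, if_neg hne]
      · exact coeff_zero m
  · have h0 : coeff m f = 0 := notMem_support_iff.mp hm
    rw [h0, ite_self]
    apply Finset.sum_eq_zero
    intro m' hm'
    have hne : m' ≠ m := fun h => hm (h ▸ hm')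
    split_ifs
    · rw [coeff_monomial, if_neg hne]
    · exact coeff_zero m

theorem compP_add (S : Finset (Fin d)) (f g : MvPolynomial (Fin d × Fin n) F) :
    compP S (f + g) = compP S f + compP S g := by
  ext m
  simp only [coeff_compP, coeff_add]
  split <;> simp

theorem compP_zero (S : Finset (Fin d)) : compP S (0 : MvPolynomial (Fin d × Fin n) F) = 0 := by
  ext m; simp [coeff_compP]

theorem compP_sum (S : Finset (Fin d)) {ι : Type*} (s : Finset ι)
    (f : ι → MvPolynomial (Fin d × Fin n) F) :
    compP S (∑ x ∈ s, f x) = ∑ x ∈ s, compP S (f x) := by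
  classical
  induction s using Finset.induction_on with
  | empty => simp [compP_zero]
  | insert _ _ hx ih => rw [Finset.sum_insert hx, compP_add, ih, Finset.sum_insert hx]

theorem compP_monomial (S : Finset (Fin d)) (m : Fin d × Fin n →₀ ℕ) (a : F) :
    compP S (monomial m a) = if IsProf S m then monomial m a else 0 := by
  classical
  ext m'
  rw [coeff_compP, apply_ite (coeff m'), coeff_zero, coeff_monomial]
  by_cases hmm : m = m'
  · subst hmm; simp
  · rw [if_neg hmm, ite_self, ite_self]


theorem compP_univ_mul (f g : MvPolynomial (Fin d × Fin n) F) :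
    compP Finset.univ (f * g) =
      ∑ T : Finset (Fin d), compP T f * compP Tᶜ g := by
  classical
  ext m
  rw [coeff_compP, coeff_sum]
  simp only [coeff_mul, coeff_compP]
  by_cases hpred : IsProf Finset.univ m
  · rw [if_pos hpred, Finset.sum_comm]
    apply Finset.sum_congr rfl
    intro x hx
    rw [Finset.HasAntidiagonal.mem_antidiagonal] at hx
    have hsum : ∀ i : Fin d, (∑ j, x.1 (i, j)) + (∑ j, x.2 (i, j)) = 1 := by
      intro i
      rw [← Finset.sum_add_distrib]
      have : ∀ j : Fin n, x.1 (i, j) + x.2 (i, j) = m (i, j) := by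
        intro j; rw [← Finsupp.add_apply, hx]
      simp only [this]
      simpa using hpred i
    set T₀ : Finset (Fin d) := Finset.univ.filter (fun i => (∑ j, x.1 (i, j)) = 1) with hT₀
    have hmemT₀ : ∀ i : Fin d, i ∈ T₀ ↔ (∑ j, x.1 (i, j)) = 1 := by
      intro i; simp [hT₀]
    have h1 : IsProf T₀ x.1 := by
      intro i
      by_cases hi : i ∈ T₀
      · rw [if_pos hi]; exact (hmemT₀ i).mp hi
      · rw [if_neg hi]
        have := (hmemT₀ i).not.mp hi
        have := hsum i
        omega
    have h2 : IsProf T₀ᶜ x.2 := by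
      intro i
      by_cases hi : i ∈ T₀ᶜ
      · rw [if_pos hi]
        rw [Finset.mem_compl] at hi
        have := (hmemT₀ i).not.mp hi
        have := hsum i
        omega
      · rw [if_neg hi]
        rw [Finset.mem_compl, not_not] at hi
        have := (hmemT₀ i).mp hi
        have := hsum i
        omega
    rw [Finset.sum_eq_single T₀ (fun T _ hne => ?_) (fun h => absurd (Finset.mem_univ T₀) h)]
    · rw [if_pos h1, if_pos h2]
    · by_cases hT : IsProf T x.1
      · exfalso
        apply hne
        ext i
        rw [hmemT₀ i]
        constructor
        · intro hiT
          have := hT i; rw [if_pos hiT] at this; exact this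
        · intro hs
          by_contra hiT
          have := hT i; rw [if_neg hiT] at this; omega
      · rw [if_neg hT, zero_mul]
  · rw [if_neg hpred]
    symm
    apply Finset.sum_eq_zero
    intro T _
    apply Finset.sum_eq_zero
    intro x hx
    rw [Finset.HasAntidiagonal.mem_antidiagonal] at hx
    by_cases h1 : IsProf T x.1
    · by_cases h2 : IsProf Tᶜ x.2
      · exfalso
        apply hpred
        intro i
        rw [if_pos (Finset.mem_univ i)]
        have e1 := h1 i
        have e2 := h2 i
        have : ∀ j : Fin n, x.1 (i, j) + x.2 (i, j) = m (i, j) := by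
          intro j; rw [← Finsupp.add_apply, hx]
        have hadd : (∑ j, x.1 (i, j)) + (∑ j, x.2 (i, j)) = ∑ j, m (i, j) := by
          rw [← Finset.sum_add_distrib]; simp only [this]
        rw [hadd.symm]
        by_cases hi : i ∈ T
        · rw [if_pos hi] at e1
          rw [if_neg (by simpa using hi)] at e2
          omega
        · rw [if_neg hi] at e1
          rw [if_pos (Finset.mem_compl.mpr hi)] at e2
          omega
      · rw [if_neg h2, mul_zero]
    · rw [if_neg h1, zero_mul]


def Mdeg (m : Fin d × Fin n →₀ ℕ) : ℕ := ∑ v : Fin d × Fin n, m v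

def DegGE (k : ℕ) (f : MvPolynomial (Fin d × Fin n) F) : Prop :=
  ∀ m ∈ f.support, k ≤ Mdeg m

theorem Mdeg_add (m m' : Fin d × Fin n →₀ ℕ) : Mdeg (m + m') = Mdeg m + Mdeg m' := by
  unfold Mdeg
  rw [← Finset.sum_add_distrib]
  exact Finset.sum_congr rfl fun v _ => Finsupp.add_apply m m' v

theorem Mdeg_pos (m : Fin d × Fin n →₀ ℕ) (h : m ≠ 0) : 1 ≤ Mdeg m := by
  by_contra hc
  apply h
  have h0 : Mdeg m = 0 := by omega
  ext v
  have := (Finset.sum_eq_zero_iff.mp h0) v (Finset.mem_univ v)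
  simpa using this

theorem Mdeg_of_isProf_univ (m : Fin d × Fin n →₀ ℕ) (h : IsProf Finset.univ m) :
    Mdeg m = d := by
  unfold Mdeg
  rw [Fintype.sum_prod_type]
  have : ∀ i : Fin d, (∑ j : Fin n, m (i, j)) = 1 := by
    intro i; simpa using h i
  simp [this]

theorem DegGE_zero (f : MvPolynomial (Fin d × Fin n) F) : DegGE 0 f := fun m _ => Nat.zero_le _

theorem DegGE_mul {j k : ℕ} {f g : MvPolynomial (Fin d × Fin n) F}
    (hf : DegGE j f) (hg : DegGE k g) : DegGE (j + k) (f * g) := by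
  classical
  intro m hm
  have := MvPolynomial.support_mul f g hm
  rw [Finset.mem_add] at this
  obtain ⟨m₁, hm₁, m₂, hm₂, rfl⟩ := this
  rw [Mdeg_add]
  exact Nat.add_le_add (hf m₁ hm₁) (hg m₂ hm₂)

theorem DegGE_pow {f : MvPolynomial (Fin d × Fin n) F} (hf : DegGE 1 f) (k : ℕ) :
    DegGE k (f ^ k) := by
  induction k with
  | zero => exact DegGE_zero _
  | succ k ih =>
    rw [pow_succ]
    exact DegGE_mul ih hf

theorem DegGE_of_constantCoeff_eq_zero {f : MvPolynomial (Fin d × Fin n) F}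
    (hf : constantCoeff f = 0) : DegGE 1 f := by
  intro m hm
  apply Mdeg_pos
  rintro rfl
  rw [MvPolynomial.mem_support_iff] at hm
  exact hm (by rw [← hf, constantCoeff_eq])

theorem DegGE_cancel {k : ℕ} {δ h : MvPolynomial (Fin d × Fin n) F}
    (hδ : constantCoeff δ ≠ 0) (hdh : DegGE k (δ * h)) : DegGE k h := by
  classical
  by_contra hc
  unfold DegGE at hc
  push_neg at hc
  have hne : (h.support.filter (fun m => Mdeg m < k)).Nonempty := by
    obtain ⟨m, hm, hmk⟩ := hc
    exact ⟨m, Finset.mem_filter.mpr ⟨hm, by omega⟩⟩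
  obtain ⟨m₀, hm₀, hmin⟩ := Finset.exists_min_image _ Mdeg hne
  rw [Finset.mem_filter] at hm₀
  obtain ⟨hm₀s, hm₀k⟩ := hm₀
  have hco : coeff m₀ (δ * h) = constantCoeff δ * coeff m₀ h := by
    rw [coeff_mul]
    rw [Finset.sum_eq_single ((0 : Fin d × Fin n →₀ ℕ), m₀)]
    · rw [constantCoeff_eq]
    · intro x hx hne'
      rw [Finset.HasAntidiagonal.mem_antidiagonal] at hx
      by_cases h1 : x.1 = 0
      · exfalso; apply hne'
        have : x.2 = m₀ := by rw [← hx, h1, zero_add]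
        exact Prod.ext h1 this
      · have hdeg : Mdeg x.2 < Mdeg m₀ := by
          have := Mdeg_add x.1 x.2
          rw [hx] at this
          have := Mdeg_pos x.1 h1
          omega
        have : coeff x.2 h = 0 := by
          by_contra hcc
          have hx2 : x.2 ∈ h.support.filter (fun m => Mdeg m < k) :=
            Finset.mem_filter.mpr ⟨MvPolynomial.mem_support_iff.mpr hcc, by omega⟩
          have := hmin x.2 hx2
          omega
        rw [this, mul_zero]
    · intro hns
      exfalso
      exact hns (Finset.HasAntidiagonal.mem_antidiagonal.mpr (zero_add m₀))
  have : coeff m₀ (δ * h) ≠ 0 :=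
    hco ▸ mul_ne_zero hδ (MvPolynomial.mem_support_iff.mp hm₀s)
  have := hdh m₀ (MvPolynomial.mem_support_iff.mpr this)
  omega


theorem compP_univ_eq_zero {h : MvPolynomial (Fin d × Fin n) F}
    (hd : DegGE (d + 1) h) : compP Finset.univ h = 0 := by
  ext m
  rw [coeff_compP, coeff_zero]
  split_ifs with hp
  · by_contra hc
    have hm : m ∈ h.support := MvPolynomial.mem_support_iff.mpr hc
    have := hd m hm
    rw [Mdeg_of_isProf_univ m hp] at this
    omega
  · rfl

/-- product of X's over a finset equals a monomial with indicator exponents -/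
theorem prod_X_eq_monomial (t : Finset (Fin d × Fin n)) :
    (∏ v ∈ t, (X v : MvPolynomial (Fin d × Fin n) F)) =
      monomial (∑ v ∈ t, Finsupp.single v 1) 1 := by
  classical
  induction t using Finset.induction_on with
  | empty => simp [monomial_zero']
  | insert _ _ hx ih =>
    rw [Finset.prod_insert hx, ih, Finset.sum_insert hx, X, monomial_mul, one_mul]

/-- Key lemma: the full multilinear component of a shifted multilinear polynomial
is the polynomial itself. -/
theorem compP_univ_shift (pp : Fin d × Fin n → F) (f : MvPolynomial (Fin d × Fin n) F)
    (hf : ∀ m ∈ f.support, IsProf Finset.univ m) :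
    compP Finset.univ
      ((aeval fun v : Fin d × Fin n => (X v : MvPolynomial (Fin d × Fin n) F) + C (pp v)) f)
      = f := by
  classical
  conv_lhs => rw [← support_sum_monomial_coeff f]
  rw [map_sum, compP_sum]
  refine (Finset.sum_congr rfl fun m hm => ?_).trans (support_sum_monomial_coeff f)
  have hprof := hf m hm
  -- each exponent is ≤ 1
  have hle : ∀ v : Fin d × Fin n, m v ≤ 1 := by
    intro v
    have h1 : (∑ j : Fin n, m (v.1, j)) = 1 := by simpa using hprof v.1
    calc m v = m (v.1, v.2) := by rfl
    _ ≤ ∑ j : Fin n, m (v.1, j) := Finset.single_le_sum (f := fun j : Fin n => m (v.1, j))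
        (fun j _ => Nat.zero_le _) (Finset.mem_univ v.2)
    _ = 1 := h1
  have hsupp1 : ∀ v ∈ m.support, m v = 1 := by
    intro v hv
    have := Finsupp.mem_support_iff.mp hv
    have := hle v
    omega
  -- uniqueness of block representative
  have huniq : ∀ i : Fin d, ∀ j j' : Fin n, (i, j) ∈ m.support → (i, j') ∈ m.support → j = j' := by
    intro i j j' hj hj'
    by_contra hne
    have h1 : (∑ jj : Fin n, m (i, jj)) = 1 := by simpa using hprof i
    have hj1 := hsupp1 _ hj
    have hj'1 := hsupp1 _ hj'
    have hsub : ({j, j'} : Finset (Fin n)) ⊆ Finset.univ := Finset.subset_univ _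
    have h2 : (2 : ℕ) ≤ ∑ jj : Fin n, m (i, jj) := by
      calc (2 : ℕ) = ∑ jj ∈ ({j, j'} : Finset (Fin n)), m (i, jj) := by
            rw [Finset.sum_pair hne, hj1, hj'1]
      _ ≤ ∑ jj : Fin n, m (i, jj) := Finset.sum_le_sum_of_subset hsub
    omega
  -- monomial as product of X's
  have hmono : (monomial m (coeff m f) : MvPolynomial (Fin d × Fin n) F) =
      C (coeff m f) * ∏ v ∈ m.support, X v := by
    rw [monomial_eq]
    congr 1
    rw [Finsupp.prod]
    exact Finset.prod_congr rfl fun v hv => by rw [hsupp1 v hv, pow_one]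
  rw [hmono, map_mul, map_prod]
  have hC : (aeval fun v : Fin d × Fin n => (X v : MvPolynomial (Fin d × Fin n) F) + C (pp v))
      (C (coeff m f)) = C (coeff m f) := by
    rw [aeval_C, algebraMap_eq]
  simp only [hC, aeval_X]
  rw [Finset.prod_add]
  rw [Finset.mul_sum, compP_sum]
  -- identify each summand
  have hterm : ∀ t ∈ m.support.powerset,
      compP Finset.univ (C (coeff m f) * ((∏ v ∈ t, (X v : MvPolynomial (Fin d × Fin n) F)) *
        ∏ v ∈ m.support \ t, C (pp v))) =
      if t = m.support then monomial m (coeff m f) else 0 := by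
    intro t ht
    rw [Finset.mem_powerset] at ht
    rw [prod_X_eq_monomial]
    rw [← map_prod C (fun v => pp v) (m.support \ t)]
    set c : F := ∏ v ∈ m.support \ t, pp v with hc
    rw [mul_comm (monomial _ 1) (C c), ← mul_assoc, ← C_mul, C_mul_monomial, mul_one]
    rw [compP_monomial]
    set mt : Fin d × Fin n →₀ ℕ := ∑ v ∈ t, Finsupp.single v 1 with hmt
    have hmtapp : ∀ v : Fin d × Fin n, mt v = if v ∈ t then 1 else 0 := by
      intro v
      rw [hmt, Finsupp.finset_sum_apply]
      simp [Finsupp.single_apply]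
    by_cases hts : t = m.support
    · subst hts
      have hmtm : mt = m := by
        ext v
        rw [hmtapp v]
        by_cases hv : v ∈ m.support
        · rw [if_pos hv, hsupp1 v hv]
        · rw [if_neg hv]
          exact (Finsupp.notMem_support_iff.mp hv).symm
      rw [hmtm]
      rw [if_pos hprof, if_pos rfl]
      have : c = 1 := by rw [hc]; simp
      rw [this, mul_one]
    · rw [if_neg hts]
      have : ¬ IsProf Finset.univ mt := by
        intro hP
        -- t ⊊ m.support : pick v ∈ m.support \ t
        have hex : ∃ v, v ∈ m.support ∧ v ∉ t := by
          by_contra hno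
          push_neg at hno
          exact hts (Finset.Subset.antisymm ht hno)
        obtain ⟨v, hvs, hvt⟩ := hex
        have h0 : (∑ j : Fin n, mt (v.1, j)) = 1 := by simpa using hP v.1
        have : ∀ j : Fin n, mt (v.1, j) = 0 := by
          intro j
          rw [hmtapp]
          by_cases hj : (v.1, j) ∈ t
          · exfalso
            have hjs : (v.1, j) ∈ m.support := ht hj
            have := huniq v.1 j v.2 hjs (by exact hvs)
            subst this
            exact hvt hj
          · rw [if_neg hj]
        rw [Finset.sum_eq_zero (fun j _ => this j)] at h0
        exact one_ne_zero h0.symm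
      rw [if_neg this]
  rw [Finset.sum_congr rfl hterm]
  rw [Finset.sum_ite_eq' m.support.powerset m.support (fun _ => monomial m (coeff m f))]
  rw [if_pos (Finset.mem_powerset_self _)]
  exact hmono


theorem isMultilinearOn_compP (S : Finset (Fin d)) (f : MvPolynomial (Fin d × Fin n) F) :
    IsMultilinearOn S (compP S f) := by
  intro m hm i
  have hne := MvPolynomial.mem_support_iff.mp hm
  rw [coeff_compP] at hne
  by_cases hc : IsProf S m
  · exact hc i
  · rw [if_neg hc] at hne
    exact absurd rfl hne

end AuxP

section AuxM
open Matrix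


variable {F : Type*} [Field F] {a b r : ℕ}

theorem det_isUnit_of_rank_eq {r : ℕ} (D : Matrix (Fin r) (Fin r) F) (hD : D.rank = r) :
    IsUnit D.det := by
  classical
  rw [isUnit_iff_ne_zero]
  intro hdet
  obtain ⟨v, hv, hv0⟩ := Matrix.exists_mulVec_eq_zero_iff.mpr hdet
  have hker : v ∈ LinearMap.ker D.mulVecLin := by
    rw [LinearMap.mem_ker]; exact hv0
  have hkpos : 0 < Module.finrank F (LinearMap.ker D.mulVecLin) := by
    rw [Module.finrank_pos_iff]
    exact ⟨⟨⟨v, hker⟩, 0, by simp [Subtype.ext_iff, hv]⟩⟩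
  have hrn := LinearMap.finrank_range_add_finrank_ker D.mulVecLin
  rw [Module.finrank_fintype_fun_eq_card, Fintype.card_fin] at hrn
  have : D.rank < r := by
    rw [Matrix.rank]
    omega
  omega

theorem exists_cols (B : Matrix (Fin a) (Fin b) F) (hB : B.rank = r) :
    ∃ κ : Fin r → Fin b, Function.Injective κ ∧ (B.submatrix id κ).rank = r := by
  classical
  have hspan : B.rank = Module.finrank F (Submodule.span F (Set.range Bᵀ)) :=
    Matrix.rank_eq_finrank_span_cols B
  obtain ⟨s, hst, hsp, hind⟩ := exists_linearIndependent F (Set.range Bᵀ)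
  have hfin : s.Finite := hind.setFinite
  haveI := hfin.fintype
  have hcard : Fintype.card s = r := by
    have h1 := finrank_span_set_eq_card hind
    rw [hsp, ← hspan, hB] at h1
    rw [Set.toFinset_card] at h1
    omega
  let e : Fin r ≃ s := (Fintype.equivFinOfCardEq hcard).symm
  have hchoose : ∀ x : s, ∃ j : Fin b, Bᵀ j = (x : Fin a → F) := fun x => hst x.2
  choose jdx hjdx using hchoose
  refine ⟨fun t => jdx (e t), ?_, ?_⟩
  · intro t1 t2 h
    have : (e t1 : Fin a → F) = (e t2 : Fin a → F) := by
      simp only at h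
      rw [← hjdx (e t1), ← hjdx (e t2), h]
    exact e.injective (Subtype.ext this)
  · have hr : Set.range (B.submatrix id (fun t => jdx (e t)))ᵀ = s := by
      ext x
      constructor
      · rintro ⟨t, rfl⟩
        have : (B.submatrix id fun t => jdx (e t))ᵀ t = Bᵀ (jdx (e t)) := rfl
        rw [this, hjdx (e t)]
        exact (e t).2
      · intro hx
        exact ⟨e.symm ⟨x, hx⟩, by
          have : (B.submatrix id fun t => jdx (e t))ᵀ (e.symm ⟨x, hx⟩)
              = Bᵀ (jdx (e (e.symm ⟨x, hx⟩))) := rfl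
          rw [this, hjdx, e.apply_symm_apply]⟩
    rw [show (B.submatrix id fun t => jdx (e t)).rank = Module.finrank F
        (Submodule.span F (Set.range (B.submatrix id fun t => jdx (e t))ᵀ)) from
        Matrix.rank_eq_finrank_span_cols _, hr, hsp, ← hspan, hB]

theorem exists_invertible_submatrix (B : Matrix (Fin a) (Fin b) F) (hB : B.rank = r) :
    ∃ (ρ : Fin r → Fin a) (κ : Fin r → Fin b), Function.Injective ρ ∧ Function.Injective κ ∧
      IsUnit (B.submatrix ρ κ).det := by
  obtain ⟨κ, hκinj, hκ⟩ := exists_cols B hB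
  have hCT : (B.submatrix id κ)ᵀ.rank = r := by rw [Matrix.rank_transpose]; exact hκ
  obtain ⟨ρ, hρinj, hρ⟩ := exists_cols (B.submatrix id κ)ᵀ hCT
  refine ⟨ρ, κ, hρinj, hκinj, ?_⟩
  have heq : ((B.submatrix id κ)ᵀ.submatrix id ρ) = (B.submatrix ρ κ)ᵀ := by
    ext t s; rfl
  rw [heq] at hρ
  have := det_isUnit_of_rank_eq _ hρ
  rwa [Matrix.det_transpose] at this




variable {K : Type*} [Field K]

theorem rank_submatrix_le' {m₁ n₁ : ℕ} {ι ι' : Type*} [Fintype ι] [Fintype ι'] [DecidableEq ι]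
    (A : Matrix (Fin m₁) (Fin n₁) K) (e : ι → Fin m₁) (f : ι' → Fin n₁) :
    (A.submatrix e f).rank ≤ A.rank := by
  classical
  have h1 : (1 : Matrix (Fin m₁) (Fin m₁) K).submatrix e (Equiv.refl (Fin m₁)) * A
      = A.submatrix e id := by
    rw [Matrix.one_submatrix_mul]
    rfl
  have h2 : (A.submatrix e id) * (1 : Matrix (Fin n₁) (Fin n₁) K).submatrix (Equiv.refl (Fin n₁)) f
      = A.submatrix e f := by
    rw [Matrix.mul_submatrix_one]
    rfl
  calc (A.submatrix e f).rank
      ≤ (A.submatrix e id).rank := by rw [← h2]; exact Matrix.rank_mul_le_left _ _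
    _ ≤ A.rank := by rw [← h1]; exact Matrix.rank_mul_le_right _ _

theorem minor_vanish {m₁ n₁ r : ℕ} {ι : Type*} [Fintype ι] [DecidableEq ι]
    (hcard : r < Fintype.card ι)
    (A : Matrix (Fin m₁) (Fin n₁) K) (hA : A.rank = r) (e : ι → Fin m₁) (f : ι → Fin n₁) :
    (A.submatrix e f).det = 0 := by
  by_contra hdet
  have hunit : IsUnit (A.submatrix e f) := (Matrix.isUnit_iff_isUnit_det _).mpr
    (isUnit_iff_ne_zero.mpr hdet)
  have h1 := Matrix.rank_of_isUnit _ hunit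
  have h2 := rank_submatrix_le' A e f
  omega


variable {R : Type*} [CommRing R] [IsDomain R]

/-- Key identity: if all bordered (r+1)-minors of `Mt` around the `ρ,κ` submatrix vanish
and that submatrix has nonzero determinant, then `Mt` admits a rank-`r` adjugate
factorization after clearing the determinant. -/
theorem key_identity (Mt : Matrix (Fin a) (Fin b) R) (ρ : Fin r → Fin a) (κ : Fin r → Fin b)
    (hdet : (Mt.submatrix ρ κ).det ≠ 0)
    (hminors : ∀ (e : Fin r ⊕ Unit → Fin a) (f : Fin r ⊕ Unit → Fin b),
      (Mt.submatrix e f).det = 0)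
    (i : Fin a) (j : Fin b) :
    (Mt.submatrix ρ κ).det * Mt i j =
      ∑ s : Fin r, (∑ t : Fin r, Mt i (κ t) * (Mt.submatrix ρ κ).adjugate t s) * Mt (ρ s) j := by
  classical
  set A : Matrix (Fin r) (Fin r) R := Mt.submatrix ρ κ with hA
  set K' := FractionRing R
  set φ : R →+* K' := algebraMap R K' with hφ
  have hinj : Function.Injective φ := IsFractionRing.injective R K'
  apply hinj
  rw [_root_.map_mul, map_sum]
  simp only [_root_.map_mul, map_sum]
  -- the block matrix over K'
  set Ak : Matrix (Fin r) (Fin r) K' := A.map φ with hAk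
  have hdetAk : Ak.det = φ A.det := (RingHom.map_det φ A).symm
  have hdetAkne : Ak.det ≠ 0 := by
    rw [hdetAk]
    intro h
    exact hdet (hinj (h.trans (map_zero φ).symm))
  haveI : Invertible Ak := Ak.invertibleOfIsUnitDet (isUnit_iff_ne_zero.mpr hdetAkne)
  haveI : Invertible Ak.det := Ak.detInvertibleOfInvertible
  set Bk : Matrix (Fin r) Unit K' := Matrix.of (fun s _ => φ (Mt (ρ s) j)) with hBk
  set Ck : Matrix Unit (Fin r) K' := Matrix.of (fun _ t => φ (Mt i (κ t))) with hCk
  set Dk : Matrix Unit Unit K' := Matrix.of (fun _ _ => φ (Mt i j)) with hDk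
  set e0 : Fin r ⊕ Unit → Fin a := Sum.elim ρ fun _ => i with he0
  set f0 : Fin r ⊕ Unit → Fin b := Sum.elim κ fun _ => j with hf0
  have hN : Matrix.fromBlocks Ak Bk Ck Dk = ((Mt.map φ).submatrix e0 f0) := by
    ext x y
    rcases x with s | u <;> rcases y with t | u' <;> rfl
  have hdetN : (Matrix.fromBlocks Ak Bk Ck Dk).det = 0 := by
    rw [hN, Matrix.submatrix_map]
    have hmapdet : ((Mt.submatrix e0 f0).map ⇑φ).det = φ ((Mt.submatrix e0 f0).det) :=
      (RingHom.map_det φ _).symm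
    rw [hmapdet, hminors, map_zero]
  rw [Matrix.det_fromBlocks₁₁] at hdetN
  have hschur : (Dk - Ck * ⅟Ak * Bk) () () = 0 := by
    rcases mul_eq_zero.mp hdetN with h | h
    · exact absurd h hdetAkne
    · have := Matrix.det_unique (Dk - Ck * ⅟Ak * Bk)
      rw [h] at this
      exact this.symm
  have hD : Dk () () = (Ck * ⅟Ak * Bk) () () := by
    have h := hschur
    rw [Matrix.sub_apply] at h
    exact sub_eq_zero.mp h
  -- multiply by det Ak
  have hadj : Ak.det • ⅟Ak = Ak.adjugate := by
    rw [Matrix.invOf_eq, smul_smul, mul_invOf_self, one_smul]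
  have hmain : Ak.det * Dk () () = (Ck * Ak.adjugate * Bk) () () := by
    rw [← hadj, Matrix.mul_smul, Matrix.smul_mul, Matrix.smul_apply, smul_eq_mul, hD]
  have hadjmap : Ak.adjugate = A.adjugate.map ⇑φ := by
    have h := RingHom.map_adjugate φ A
    simp only [RingHom.mapMatrix_apply] at h
    rw [hAk]
    exact h.symm
  rw [hdetAk] at hmain
  calc φ A.det * φ (Mt i j) = φ A.det * Dk () () := rfl
  _ = (Ck * Ak.adjugate * Bk) () () := hmain
  _ = ∑ s : Fin r, (∑ t : Fin r, φ (Mt i (κ t)) * φ (A.adjugate t s)) * φ (Mt (ρ s) j) := by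
      rw [hadjmap]
      simp only [Matrix.mul_apply]
      rfl


end AuxM

/-- If `CR(M) = MaxR(M) = r`, then `PR(M) ≤ 2^d · r`. -/
theorem statement_14 (F : Type*) [Field F] (d n a b : ℕ) (hn : 1 ≤ n) (r : ℕ)
    (M : Matrix (Fin a) (Fin b) (MvPolynomial (Fin d × Fin n) F))
    (hM : ∀ i j, IsMultilinear (M i j))
    (hcr : CR M = r) (hmax : MaxR M = r) :
    PR M ≤ 2 ^ d * r := by
  classical
  apply Nat.sInf_le
  show HasPRDecomp M (2 ^ d * r)
  -- Step 1: a point of maximal rank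
  obtain ⟨p, hp⟩ : ∃ p : Fin d → Fin n → F, (evalMat M p).rank = r := by
    have hne : (Set.range fun p : Fin d → Fin n → F => (evalMat M p).rank).Nonempty :=
      Set.range_nonempty _
    have hbdd : BddAbove (Set.range fun p : Fin d → Fin n → F => (evalMat M p).rank) := by
      refine ⟨b, ?_⟩
      rintro x ⟨p, rfl⟩
      exact (Matrix.rank_le_card_width _).trans (le_of_eq (Fintype.card_fin b))
    have hsup : sSup (Set.range fun p : Fin d → Fin n → F => (evalMat M p).rank) = r := by
      rw [sSup_range]
      exact hmax
    obtain ⟨p, hp⟩ := Nat.sSup_mem hne hbdd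
    exact ⟨p, hp.trans hsup⟩
  -- Step 2: invertible r×r submatrix at p
  obtain ⟨ρ, κ, hρinj, hκinj, hunit⟩ := exists_invertible_submatrix (evalMat M p) hp
  -- Step 3: shifted matrix
  set pp : Fin d × Fin n → F := fun v => p v.1 v.2 with hpp
  set sh : MvPolynomial (Fin d × Fin n) F →ₐ[F] MvPolynomial (Fin d × Fin n) F :=
    aeval (fun v : Fin d × Fin n => X v + C (pp v)) with hsh
  set Mt : Matrix (Fin a) (Fin b) (MvPolynomial (Fin d × Fin n) F) := M.map sh with hMt
  set A : Matrix (Fin r) (Fin r) (MvPolynomial (Fin d × Fin n) F) := Mt.submatrix ρ κ with hA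
  set δ : MvPolynomial (Fin d × Fin n) F := A.det with hδdef
  -- Step 4: constant coefficient of δ is nonzero
  have hcc : ∀ f : MvPolynomial (Fin d × Fin n) F, constantCoeff (sh f) = eval pp f := by
    intro f
    have h : (constantCoeff.comp (sh.toRingHom) : MvPolynomial (Fin d × Fin n) F →+* F)
        = eval pp := by
      apply MvPolynomial.ringHom_ext
      · intro a'
        simp [hsh]
      · intro v
        simp [hsh]
    exact RingHom.congr_fun h f
  have hccA : A.map constantCoeff = (evalMat M p).submatrix ρ κ := by
    ext s t
    simp only [hA, Matrix.submatrix_apply, Matrix.map_apply, hMt]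
    rw [hcc]
    rfl
  have hccδne : constantCoeff δ ≠ 0 := by
    have hccδ : constantCoeff δ = ((evalMat M p).submatrix ρ κ).det := by
      rw [hδdef]
      have h1 : constantCoeff A.det = (A.map constantCoeff).det := by
        have h2 := RingHom.map_det (constantCoeff : MvPolynomial (Fin d × Fin n) F →+* F) A
        simpa [RingHom.mapMatrix_apply] using h2
      rw [h1, hccA]
    rw [hccδ]
    exact hunit.ne_zero
  have hδne : δ ≠ 0 := fun h => hccδne (by rw [h, map_zero])
  -- Step 5: all bordered minors vanish
  have hminorsM : ∀ (e : Fin r ⊕ Unit → Fin a) (f : Fin r ⊕ Unit → Fin b),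
      (M.submatrix e f).det = 0 := by
    intro e f
    have hinj : Function.Injective (algebraMap (MvPolynomial (Fin d × Fin n) F)
        (FractionRing (MvPolynomial (Fin d × Fin n) F))) := IsFractionRing.injective _ _
    apply hinj
    rw [map_zero]
    have h1 : (algebraMap (MvPolynomial (Fin d × Fin n) F)
          (FractionRing (MvPolynomial (Fin d × Fin n) F))) (M.submatrix e f).det
        = ((M.submatrix e f).map (algebraMap (MvPolynomial (Fin d × Fin n) F)
          (FractionRing (MvPolynomial (Fin d × Fin n) F)))).det := by
      have h2 := RingHom.map_det (algebraMap (MvPolynomial (Fin d × Fin n) F)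
        (FractionRing (MvPolynomial (Fin d × Fin n) F))) (M.submatrix e f)
      simpa [RingHom.mapMatrix_apply] using h2
    rw [h1, ← Matrix.submatrix_map]
    exact minor_vanish (by simp) _ hcr e f
  have hminors : ∀ (e : Fin r ⊕ Unit → Fin a) (f : Fin r ⊕ Unit → Fin b),
      (Mt.submatrix e f).det = 0 := by
    intro e f
    rw [hMt, Matrix.submatrix_map]
    have h1 : ((M.submatrix e f).map sh).det = sh (M.submatrix e f).det := by
      have h2 := RingHom.map_det (sh.toRingHom) (M.submatrix e f)
      simpa [RingHom.mapMatrix_apply] using h2.symm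
    rw [h1, hminorsM, map_zero]
  -- Step 6: the key adjugate identity
  have hkey := key_identity Mt ρ κ hδne hminors
  -- Step 7: geometric series
  set δ0 : F := constantCoeff δ with hδ0def
  set ε : MvPolynomial (Fin d × Fin n) F := 1 - C δ0⁻¹ * δ with hε
  set G : MvPolynomial (Fin d × Fin n) F := ∑ k ∈ Finset.range (d+1), ε ^ k with hG
  set R' : Fin a → Fin r → MvPolynomial (Fin d × Fin n) F :=
    fun i s => ∑ t, Mt i (κ t) * A.adjugate t s with hR'
  set Q' : Fin r → Fin b → MvPolynomial (Fin d × Fin n) F := fun s j => Mt (ρ s) j with hQ'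
  set Ph : Fin a → Fin r → MvPolynomial (Fin d × Fin n) F :=
    fun i s => C δ0⁻¹ * (G * R' i s) with hPh
  have hgeom : (1 - ε) * G = 1 - ε ^ (d+1) := by
    have h := geom_sum_mul ε (d+1)
    calc (1 - ε) * G = -(G * (ε - 1)) := by rw [hG]; ring
    _ = -(ε ^ (d+1) - 1) := by rw [hG, h]
    _ = 1 - ε ^ (d+1) := by ring
  have hδfac : δ * C δ0⁻¹ = 1 - ε := by rw [hε]; ring
  have hδPh : ∀ i s, δ * Ph i s = (1 - ε ^ (d+1)) * R' i s := by
    intro i s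
    calc δ * Ph i s = (δ * C δ0⁻¹) * (G * R' i s) := by rw [hPh]; ring
    _ = ((1 - ε) * G) * R' i s := by rw [hδfac]; ring
    _ = (1 - ε ^ (d+1)) * R' i s := by rw [hgeom]
  have hεcc : constantCoeff ε = 0 := by
    rw [hε, map_sub, map_one, _root_.map_mul, constantCoeff_C, ← hδ0def,
      inv_mul_cancel₀ hccδne, sub_self]
  -- Step 8: the error term has high degree
  have hcomp0 : ∀ i j, compP Finset.univ (Mt i j - ∑ s, Ph i s * Q' s j) = 0 := by
    intro i j
    apply compP_univ_eq_zero
    apply DegGE_cancel hccδne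
    have hd : δ * (Mt i j - ∑ s, Ph i s * Q' s j) = ε ^ (d+1) * ∑ s, R' i s * Q' s j := by
      rw [mul_sub, Finset.mul_sum, hkey i j]
      have h3 : ∀ s : Fin r, δ * (Ph i s * Q' s j) = ((1 - ε ^ (d+1)) * R' i s) * Q' s j := by
        intro s
        rw [← mul_assoc, hδPh]
      rw [Finset.sum_congr rfl (fun s _ => h3 s), Finset.mul_sum, ← Finset.sum_sub_distrib]
      apply Finset.sum_congr rfl
      intro s _
      ring
    rw [hd]
    have h1 : DegGE (d+1) (ε ^ (d+1) : MvPolynomial (Fin d × Fin n) F) :=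
      DegGE_pow (DegGE_of_constantCoeff_eq_zero hεcc) (d+1)
    have h2 := DegGE_mul h1 (DegGE_zero (∑ s, R' i s * Q' s j))
    simpa using h2
  -- Step 9/10: the decomposition of each entry
  have hMijdecomp : ∀ i j, M i j =
      ∑ s, ∑ T : Finset (Fin d), compP T (Ph i s) * compP Tᶜ (Q' s j) := by
    intro i j
    have h0 : M i j = compP Finset.univ (Mt i j) :=
      (compP_univ_shift pp (M i j) (hM i j)).symm
    rw [h0]
    have h1 : Mt i j = (∑ s, Ph i s * Q' s j) + (Mt i j - ∑ s, Ph i s * Q' s j) := by ring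
    rw [h1, compP_add, hcomp0 i j, add_zero, compP_sum]
    apply Finset.sum_congr rfl
    intro s _
    exact compP_univ_mul (Ph i s) (Q' s j)
  -- Step 11: assemble
  have hcard : Fintype.card (Finset (Fin d) × Fin r) = 2 ^ d * r := by
    simp [Fintype.card_finset]
  set e := Fintype.equivFinOfCardEq hcard with he
  refine ⟨fun t => (e.symm t).1, fun t i => compP (e.symm t).1 (Ph i (e.symm t).2),
    fun t j => compP ((e.symm t).1)ᶜ (Q' (e.symm t).2 j), ?_, ?_, ?_⟩
  · intro t i
    exact isMultilinearOn_compP _ _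
  · intro t j
    exact isMultilinearOn_compP _ _
  · ext i j
    rw [Matrix.sum_apply]
    simp only [Matrix.of_apply]
    rw [hMijdecomp i j, Finset.sum_comm]
    have hfinal : ∑ t : Fin (2 ^ d * r), compP (e.symm t).1 (Ph i (e.symm t).2) *
          compP ((e.symm t).1)ᶜ (Q' (e.symm t).2 j)
        = ∑ y : Finset (Fin d) × Fin r, compP y.1 (Ph i y.2) * compP (y.1)ᶜ (Q' y.2 j) :=
      Fintype.sum_equiv e.symm _ _ (fun t => rfl)
    rw [hfinal, Fintype.sum_prod_type]
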